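/- arXiv:2308.15629 — 4 statements merged into one kernel-verified Lean document; each statement's English description precedes it below -/
import Mathlib

section
/- Fix t ≥ 0, π ∈ (0,1) and λ > 0 with π = λ/(1+λ) (so 1-π = 1/(1+λ)). For 0 ≤ s₁ ≤ t and s₂ ≥ s₁ define F_λ(s₁,s₂) = [π(1 - e^{-s₂}) + (1-π)(1 - e^{-λ s₁} - (λ/(λ-1))(e^{-s₂} - e^{-λ s₁} e^{s₁-s₂}))] / [π + (1-π)(1 - e^{-λ t})]. Then as λ → 0⁺, F_λ(s₁,s₂) → (1 - e^{s₁-s₂} + s₁)/(1+t). -/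
open Real Filter

lemma key_slope (a : ℝ) : Tendsto (fun lam : ℝ => (1 - exp (-(lam * a))) / lam)
    (nhdsWithin 0 (Set.Ioi 0)) (nhds a) := by
  have h1 : HasDerivAt (fun x : ℝ => x * a) a 0 := hasDerivAt_mul_const a
  have h3 : HasDerivAt (fun x : ℝ => exp (-(x * a))) (exp (-(0 * a)) * (-a)) 0 :=
    h1.neg.exp
  have h4 : HasDerivAt (fun x : ℝ => 1 - exp (-(x * a))) a 0 := by
    simpa using h3.const_sub 1
  have h5 := hasDerivAt_iff_tendsto_slope.mp h4
  have h6 : Tendsto (slope (fun x : ℝ => 1 - exp (-(x * a))) 0)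
      (nhdsWithin 0 (Set.Ioi 0)) (nhds a) :=
    h5.mono_left (nhdsWithin_mono _ (fun x hx => ne_of_gt hx))
  refine h6.congr' ?_
  filter_upwards [self_mem_nhdsWithin] with x hx
  simp [slope_def_field, div_eq_div_iff]

/-- The conditional joint CDF of the switch-on/switch-off marks converges, as `λ → 0⁺`
(with `π = λ/(1+λ)`), to `(1 - e^{s₁-s₂} + s₁)/(1+t)`. -/
theorem marks_cdf_limit (t s₁ s₂ : ℝ) (ht : 0 ≤ t) (h0 : 0 ≤ s₁) (h1t : s₁ ≤ t)
    (h12 : s₁ ≤ s₂) :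
    Tendsto (fun lam : ℝ =>
        ((lam / (1 + lam)) * (1 - exp (-s₂)) +
          (1 / (1 + lam)) * (1 - exp (-(lam * s₁)) -
            (lam / (lam - 1)) * (exp (-s₂) - exp (-(lam * s₁)) * exp (s₁ - s₂)))) /
        ((lam / (1 + lam)) + (1 / (1 + lam)) * (1 - exp (-(lam * t)))))
      (nhdsWithin 0 (Set.Ioi 0)) (nhds ((1 - exp (s₁ - s₂) + s₁) / (1 + t))) := by
  set g : ℝ → ℝ := fun lam =>
    (1 / (1 + lam)) * (1 - exp (-s₂)) +
      (1 / (1 + lam)) * ((1 - exp (-(lam * s₁))) / lam -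
        (1 / (lam - 1)) * (exp (-s₂) - exp (-(lam * s₁)) * exp (s₁ - s₂))) with hg
  set h : ℝ → ℝ := fun lam =>
    1 / (1 + lam) + (1 / (1 + lam)) * ((1 - exp (-(lam * t))) / lam) with hh
  have hcont : ∀ b : ℝ, Tendsto (fun lam : ℝ => exp (-(lam * b)))
      (nhdsWithin 0 (Set.Ioi 0)) (nhds 1) := by
    intro b
    have : ContinuousAt (fun lam : ℝ => exp (-(lam * b))) 0 := by fun_prop
    have := this.tendsto
    simp only [zero_mul, neg_zero, exp_zero] at this
    exact this.mono_left nhdsWithin_le_nhds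
  have hinv : Tendsto (fun lam : ℝ => 1 / (1 + lam)) (nhdsWithin 0 (Set.Ioi 0)) (nhds 1) := by
    have : ContinuousAt (fun lam : ℝ => 1 / (1 + lam)) 0 := by
      apply ContinuousAt.div continuousAt_const (by fun_prop) (by norm_num)
    have := this.tendsto
    norm_num at this
    simpa [one_div] using this.mono_left nhdsWithin_le_nhds
  have hinv2 : Tendsto (fun lam : ℝ => 1 / (lam - 1)) (nhdsWithin 0 (Set.Ioi 0)) (nhds (-1)) := by
    have : ContinuousAt (fun lam : ℝ => 1 / (lam - 1)) 0 := by
      apply ContinuousAt.div continuousAt_const (by fun_prop) (by norm_num)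
    have := this.tendsto
    norm_num at this
    simpa [one_div] using this.mono_left nhdsWithin_le_nhds
  have hgl0 : Tendsto g (nhdsWithin 0 (Set.Ioi 0))
      (nhds (1 * (1 - exp (-s₂)) +
        1 * (s₁ - (-1) * (exp (-s₂) - 1 * exp (s₁ - s₂))))) :=
    (hinv.mul tendsto_const_nhds).add
      (hinv.mul ((key_slope s₁).sub
        (hinv2.mul (tendsto_const_nhds.sub ((hcont s₁).mul tendsto_const_nhds)))))
  have hgl : Tendsto g (nhdsWithin 0 (Set.Ioi 0))
      (nhds (1 - exp (s₁ - s₂) + s₁)) := by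
    rw [show (1 : ℝ) - exp (s₁ - s₂) + s₁ =
      1 * (1 - exp (-s₂)) + 1 * (s₁ - (-1) * (exp (-s₂) - 1 * exp (s₁ - s₂))) by ring]
    exact hgl0
  have hhl0 : Tendsto h (nhdsWithin 0 (Set.Ioi 0)) (nhds (1 + 1 * t)) :=
    hinv.add (hinv.mul (key_slope t))
  have hhl : Tendsto h (nhdsWithin 0 (Set.Ioi 0)) (nhds (1 + t)) := by
    rw [show (1 : ℝ) + t = 1 + 1 * t by ring]
    exact hhl0
  have hne : (1 : ℝ) + t ≠ 0 := by linarith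
  have := hgl.div hhl hne
  refine this.congr' ?_
  filter_upwards [self_mem_nhdsWithin, Ioo_mem_nhdsGT_of_mem (by norm_num : (0:ℝ) ∈ Set.Ico 0 1)]
    with x hx hx1
  have hx0 : x ≠ 0 := ne_of_gt hx
  have hxp : (1 : ℝ) + x ≠ 0 := by have := hx1.1; linarith
  have hxm : x - 1 ≠ 0 := by have := hx1.2; intro hc; linarith
  have hN : (x / (1 + x)) * (1 - exp (-s₂)) +
      (1 / (1 + x)) * (1 - exp (-(x * s₁)) -
        (x / (x - 1)) * (exp (-s₂) - exp (-(x * s₁)) * exp (s₁ - s₂))) = x * g x := by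
    simp only [hg]
    field_simp
  have hD : (x / (1 + x)) + (1 / (1 + x)) * (1 - exp (-(x * t))) = x * h x := by
    simp only [hh]
    field_simp
  show g x / h x = _
  rw [hN, hD, mul_div_mul_left _ _ hx0]
end

section
/- Let w₁,...,w_n ≥ 0 with ℓ = Σᵢ wᵢ > 0, let k ≥ 2, p_k ≥ 0, and fix i ∈ [n] with weight w_i. For each (k-1)-subset {j₁,...,j_{k-1}} of [n]\{i} set π_a = k! p_k w_i w_{j₁}···w_{j_{k-1}} / (ℓ^{k-1} + k! p_k w_i w_{j₁}···w_{j_{k-1}}). Then Σ_a π_a² ≤ ((k-1)! (k p_k)² w_i² / ℓ^{k-1}) · (Σ_j w_j²)^{k-1} / ℓ^{k-1}, where the sum ranges over all (k-1)-subsets of [n]. -/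
open Finset

lemma factorial_sum_powersetCard_prod_le {ι : Type*} [DecidableEq ι] (g : ι → ℝ)
    (hg : ∀ j, 0 ≤ g j) : ∀ (r : ℕ) (s : Finset ι),
    (r.factorial : ℝ) * ∑ t ∈ powersetCard r s, ∏ j ∈ t, g j ≤ (∑ j ∈ s, g j) ^ r := by
  intro r
  induction r with
  | zero => intro s; simp
  | succ r ih =>
    intro s
    have hsum0 : (0:ℝ) ≤ ∑ j ∈ s, g j := Finset.sum_nonneg fun j _ => hg j
    have key : ((r+1 : ℕ) : ℝ) * ∑ t ∈ powersetCard (r+1) s, ∏ j ∈ t, g j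
        = ∑ j ∈ s, g j * ∑ t ∈ powersetCard r (s.erase j), ∏ m ∈ t, g m := by
      have lhs : ((r+1 : ℕ) : ℝ) * ∑ t ∈ powersetCard (r+1) s, ∏ j ∈ t, g j
          = ∑ x ∈ (powersetCard (r+1) s).sigma (fun t => t), ∏ m ∈ x.1, g m := by
        rw [Finset.sum_sigma, Finset.mul_sum]
        refine Finset.sum_congr rfl fun t ht => ?_
        have hc : ∀ x ∈ t, ∏ m ∈ (⟨t, x⟩ : (_ : Finset ι) × ι).1, g m = ∏ m ∈ t, g m :=
          fun _ _ => rfl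
        rw [Finset.sum_congr rfl hc, Finset.sum_const, nsmul_eq_mul,
          (mem_powersetCard.1 ht).2]
      have rhs : ∑ j ∈ s, g j * ∑ t ∈ powersetCard r (s.erase j), ∏ m ∈ t, g m
          = ∑ x ∈ s.sigma (fun j => powersetCard r (s.erase j)), ∏ m ∈ insert x.1 x.2, g m := by
        rw [Finset.sum_sigma]
        refine Finset.sum_congr rfl fun j hj => ?_
        rw [Finset.mul_sum]
        refine Finset.sum_congr rfl fun t ht => ?_
        have hjt : j ∉ t := fun h =>
          (Finset.notMem_erase j s) ((mem_powersetCard.1 ht).1 h)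
        rw [Finset.prod_insert hjt]
      rw [lhs, rhs]
      refine Finset.sum_nbij' (fun x => ⟨x.2, x.1.erase x.2⟩) (fun x => ⟨insert x.1 x.2, x.1⟩)
        ?_ ?_ ?_ ?_ ?_
      · rintro ⟨t, j⟩ hx
        simp only [Finset.mem_sigma] at hx ⊢
        obtain ⟨ht, hj⟩ := hx
        obtain ⟨hts, htc⟩ := mem_powersetCard.1 ht
        refine ⟨hts hj, mem_powersetCard.2 ⟨?_, ?_⟩⟩
        · exact fun m hm => Finset.mem_erase.2 ⟨(Finset.mem_erase.1 hm).1,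
            hts (Finset.mem_of_mem_erase hm)⟩
        · rw [Finset.card_erase_of_mem hj, htc]
          omega
      · rintro ⟨j, t⟩ hx
        simp only [Finset.mem_sigma] at hx ⊢
        obtain ⟨hj, ht⟩ := hx
        obtain ⟨hts, htc⟩ := mem_powersetCard.1 ht
        have hjt : j ∉ t := fun h => (Finset.notMem_erase j s) (hts h)
        refine ⟨mem_powersetCard.2 ⟨?_, ?_⟩, Finset.mem_insert_self j t⟩
        · exact Finset.insert_subset hj (hts.trans (Finset.erase_subset j s))
        · rw [Finset.card_insert_of_notMem hjt, htc]
      · rintro ⟨t, j⟩ hx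
        simp only [Finset.mem_sigma] at hx
        simp [Finset.insert_erase hx.2]
      · rintro ⟨j, t⟩ hx
        simp only [Finset.mem_sigma] at hx
        have hjt : j ∉ t := fun h =>
          (Finset.notMem_erase j s) ((mem_powersetCard.1 hx.2).1 h)
        simp [Finset.erase_insert hjt]
      · rintro ⟨t, j⟩ hx
        simp only [Finset.mem_sigma] at hx
        simp [Finset.insert_erase hx.2]
    have step : ((r+1).factorial : ℝ) * ∑ t ∈ powersetCard (r+1) s, ∏ j ∈ t, g j
        = (r.factorial : ℝ) * (((r+1 : ℕ) : ℝ) * ∑ t ∈ powersetCard (r+1) s, ∏ j ∈ t, g j) := by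
      rw [Nat.factorial_succ]; push_cast; ring
    rw [step, key]
    calc (r.factorial : ℝ) * ∑ j ∈ s, g j * ∑ t ∈ powersetCard r (s.erase j), ∏ m ∈ t, g m
        = ∑ j ∈ s, g j * ((r.factorial : ℝ) * ∑ t ∈ powersetCard r (s.erase j), ∏ m ∈ t, g m) := by
          rw [Finset.mul_sum]; refine Finset.sum_congr rfl fun j _ => by ring
      _ ≤ ∑ j ∈ s, g j * (∑ m ∈ s.erase j, g m) ^ r := by
          refine Finset.sum_le_sum fun j _ => mul_le_mul_of_nonneg_left (ih _) (hg j)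
      _ ≤ ∑ j ∈ s, g j * (∑ m ∈ s, g m) ^ r := by
          refine Finset.sum_le_sum fun j _ => mul_le_mul_of_nonneg_left ?_ (hg j)
          exact pow_le_pow_left₀ (Finset.sum_nonneg fun m _ => hg m)
            (Finset.sum_le_sum_of_subset_of_nonneg (Finset.erase_subset j s)
              (fun m _ _ => hg m)) r
      _ = (∑ j ∈ s, g j) ^ (r+1) := by rw [← Finset.sum_mul]; ring


/-- Bound on the sum of squared group-activity probabilities for groups of size `k`
containing a fixed vertex `i`. -/
theorem pi_squared_bound (n : ℕ) (w : Fin n → ℝ) (hw : ∀ j, 0 ≤ w j)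
    (hl : 0 < ∑ j, w j) (k : ℕ) (hk : 2 ≤ k) (p : ℝ) (hp : 0 ≤ p) (i : Fin n) :
    let ℓ : ℝ := ∑ j, w j
    let π : Finset (Fin n) → ℝ := fun s =>
      (Nat.factorial k * p * w i * ∏ j ∈ s, w j) /
        (ℓ ^ (k - 1) + Nat.factorial k * p * w i * ∏ j ∈ s, w j)
    ∑ s ∈ Finset.powersetCard (k - 1) (Finset.univ : Finset (Fin n)), (π s) ^ 2 ≤
      (Nat.factorial (k - 1) * (k * p) ^ 2 * (w i) ^ 2 / ℓ ^ (k - 1)) *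
        ((∑ j, w j ^ 2) ^ (k - 1) / ℓ ^ (k - 1)) := by
  intro ℓ π
  have hℓ : 0 < ℓ := hl
  have hℓp : 0 < ℓ ^ (k - 1) := pow_pos hℓ _
  set r := k - 1 with hr
  have hkr : k = r + 1 := by omega
  -- numerator nonneg for each s
  have hnum : ∀ s : Finset (Fin n), 0 ≤ (Nat.factorial k : ℝ) * p * w i * ∏ j ∈ s, w j :=
    fun s => mul_nonneg (mul_nonneg (mul_nonneg (Nat.cast_nonneg _) hp) (hw i))
      (Finset.prod_nonneg fun j _ => hw j)
  have hπle : ∀ s : Finset (Fin n),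
      π s ≤ ((Nat.factorial k : ℝ) * p * w i * ∏ j ∈ s, w j) / ℓ ^ r := by
    intro s
    exact div_le_div_of_nonneg_left (hnum s) hℓp (le_add_of_nonneg_right (hnum s))
  have hπ0 : ∀ s : Finset (Fin n), 0 ≤ π s := fun s =>
    div_nonneg (hnum s) (le_of_lt (lt_of_lt_of_le hℓp (le_add_of_nonneg_right (hnum s))))
  have hsq : ∀ s ∈ Finset.powersetCard r (Finset.univ : Finset (Fin n)),
      (π s) ^ 2 ≤ ((Nat.factorial k : ℝ) * p * w i) ^ 2 / (ℓ ^ r) ^ 2 * ∏ j ∈ s, (w j) ^ 2 := by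
    intro s _
    have := pow_le_pow_left₀ (hπ0 s) (hπle s) 2
    refine this.trans (le_of_eq ?_)
    rw [div_pow, mul_pow, ← Finset.prod_pow]
    ring
  have haux := factorial_sum_powersetCard_prod_le (fun j => (w j) ^ 2)
    (fun j => sq_nonneg (w j)) r (Finset.univ : Finset (Fin n))
  have hfac : (0:ℝ) < (Nat.factorial r : ℝ) := by exact_mod_cast Nat.factorial_pos r
  calc ∑ s ∈ Finset.powersetCard r (Finset.univ : Finset (Fin n)), (π s) ^ 2
      ≤ ∑ s ∈ Finset.powersetCard r (Finset.univ : Finset (Fin n)),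
        ((Nat.factorial k : ℝ) * p * w i) ^ 2 / (ℓ ^ r) ^ 2 * ∏ j ∈ s, (w j) ^ 2 :=
        Finset.sum_le_sum hsq
    _ = ((Nat.factorial k : ℝ) * p * w i) ^ 2 / (ℓ ^ r) ^ 2 *
        ∑ s ∈ Finset.powersetCard r (Finset.univ : Finset (Fin n)), ∏ j ∈ s, (w j) ^ 2 := by
        rw [Finset.mul_sum]
    _ ≤ ((Nat.factorial k : ℝ) * p * w i) ^ 2 / (ℓ ^ r) ^ 2 *
        ((∑ j, (w j) ^ 2) ^ r / (Nat.factorial r : ℝ)) := by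
        refine mul_le_mul_of_nonneg_left ?_
          (div_nonneg (sq_nonneg _) (sq_nonneg _))
        rw [le_div_iff₀ hfac, mul_comm]
        exact haux
    _ = (Nat.factorial (k-1) * (k * p) ^ 2 * (w i) ^ 2 / ℓ ^ (k-1)) *
        ((∑ j, w j ^ 2) ^ (k-1) / ℓ ^ (k-1)) := by
        have hkfac : (Nat.factorial k : ℝ) = k * Nat.factorial r := by
          rw [hkr, Nat.factorial_succ]; push_cast; ring
        rw [← hr, hkfac]
        field_simp
end

section
/- For the bipartite generalized random graph with independent group indicators X_a, a ranging over subsets of [n] of size ≥ 2, where P(X_a = 1) = f(|a|)∏_{i∈a} w_i / (ℓ^{|a|-1} + f(|a|)∏_{i∈a} w_i) with ℓ = Σᵢ wᵢ, the probability of any outcome x factorizes as P(X = x) = (∏_a (1 + λ_a))⁻¹ · ∏_{i∈[n]} w_i^{d_i^(l)(x)} · ∏_a (f(d_a^(r)(x)) / ℓ^{d_a^(r)(x)(1 - 1/|a|)}), where λ_a = f(|a|)∏_{i∈a} w_i/ℓ^{|a|-1}, d_i^(l)(x) = Σ_{a∋i} x_a, d_a^(r)(x) = |a|·x_a, and f(0)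 = 1. In particular, P(X = x) depends on x only through the degree sequences (d^(l)(x), d^(r)(x)). -/
open Finset

/-- Factorization of the law of the bipartite generalized random graph through its
left- and right-degree sequences. -/
theorem bgrg_factorization (n : ℕ) (w : Fin n → ℝ) (hw : ∀ i, 0 < w i)
    (f : ℕ → ℝ) (hfpos : ∀ k, 0 < f k) (hf0 : f 0 = 1)
    (x : {a : Finset (Fin n) // 2 ≤ a.card} → Bool) :
    let ℓ : ℝ := ∑ i, w i
    let lam : {a : Finset (Fin n) // 2 ≤ a.card} → ℝ := fun a =>
      f a.1.card * (∏ i ∈ a.1, w i) / ℓ ^ (a.1.card - 1)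
    let π : {a : Finset (Fin n) // 2 ≤ a.card} → ℝ := fun a =>
      f a.1.card * (∏ i ∈ a.1, w i) /
        (ℓ ^ (a.1.card - 1) + f a.1.card * (∏ i ∈ a.1, w i))
    let dl : Fin n → ℕ := fun i => (Finset.univ.filter
      (fun a : {a : Finset (Fin n) // 2 ≤ a.card} => i ∈ a.1 ∧ x a = true)).card
    let dr : {a : Finset (Fin n) // 2 ≤ a.card} → ℕ := fun a => if x a then a.1.card else 0
    (∏ a, (if x a then π a else 1 - π a)) =
      (∏ a, (1 + lam a))⁻¹ * (∏ i, w i ^ dl i) *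
        ∏ a, (f (dr a) / ℓ ^ ((dr a : ℝ) * (1 - 1 / (a.1.card : ℝ)))) := by
  intro ℓ lam π dl dr
  -- ℓ is positive whenever a group exists
  have hℓ : ∀ _a : {a : Finset (Fin n) // 2 ≤ a.card}, 0 < ℓ := by
    intro a
    obtain ⟨i, _⟩ := Finset.card_pos.mp (lt_of_lt_of_le two_pos a.2)
    exact Finset.sum_pos (fun j _ => hw j) ⟨i, Finset.mem_univ i⟩
  -- rewrite the weight product as a product over groups
  have hwprod : (∏ i, w i ^ dl i) =
      ∏ a : {a : Finset (Fin n) // 2 ≤ a.card}, (if x a then ∏ i ∈ a.1, w i else 1) := by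
    calc (∏ i, w i ^ dl i)
        = ∏ i, ∏ _a ∈ Finset.univ.filter
            (fun a : {a : Finset (Fin n) // 2 ≤ a.card} => i ∈ a.1 ∧ x a = true), w i := by
          simp [dl]
      _ = ∏ a : {a : Finset (Fin n) // 2 ≤ a.card},
            ∏ i ∈ (if x a then a.1 else ∅), w i := by
          rw [← Finset.prod_comm' (t := fun a : {a : Finset (Fin n) // 2 ≤ a.card} =>
            if x a then a.1 else ∅)]
          intro a i
          by_cases h : x a <;> simp [h]
      _ = _ := by
          refine Finset.prod_congr rfl fun a _ => ?_
          by_cases h : x a <;> simp [h]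
  rw [hwprod, ← Finset.prod_inv_distrib, ← Finset.prod_mul_distrib,
    ← Finset.prod_mul_distrib]
  refine Finset.prod_congr rfl fun a _ => ?_
  have hk2 : 2 ≤ a.1.card := a.2
  set k := a.1.card with hkdef
  have hkpos : (0:ℝ) < (k:ℝ) := by positivity
  have hP : 0 < ∏ i ∈ a.1, w i := Finset.prod_pos fun i _ => hw i
  have hL : 0 < ℓ ^ (k - 1) := pow_pos (hℓ a) _
  have hD : 0 < ℓ ^ (k - 1) + f k * ∏ i ∈ a.1, w i :=
    add_pos hL (mul_pos (hfpos k) hP)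
  by_cases h : x a
  · -- present group
    have hdr : dr a = k := by simp [dr, h, hkdef]
    have hexp : ((dr a : ℝ)) * (1 - 1 / (k:ℝ)) = ((k - 1 : ℕ) : ℝ) := by
      rw [hdr]
      have : ((k - 1 : ℕ) : ℝ) = (k:ℝ) - 1 := by
        have : 1 ≤ k := le_trans one_le_two hk2
        push_cast [this]; ring
      rw [this]
      field_simp
    rw [hexp, Real.rpow_natCast]
    simp only [h, if_true, hdr, lam, π]
    rw [← hkdef]
    field_simp
  · -- absent group
    have hdr : dr a = 0 := by simp [dr, h]
    rw [hdr, hf0]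
    simp only [h, if_false, Nat.cast_zero, zero_mul, Real.rpow_zero, div_one, mul_one,
      lam, π, Bool.false_eq_true]
    rw [← hkdef]
    field_simp
    ring
end

section
/- Let (p_a)_{a∈A} and (q_a)_{a∈A} be success probabilities of two finite families of independent Bernoulli random variables indexed by the same set A, with max_a q_a ≤ 1 - ε̂ for some ε̂ > 0. Then the total variation distance between the product laws ⊗_a Ber(p_a) and ⊗_a Ber(q_a) is bounded by C(ε̂) · (Σ_{a∈A} (p_a - q_a)²/q_a)^{1/2} for a constant C(ε̂) depending only on ε̂; in particular, if Σ_a (p_a - q_a)²/q_a → 0 along a sequence of index sets, then |P_n(E_n) - Q_n(E_n)| → 0 uniformly over events E_n. -/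
open Finset

section JansonAux

private lemma sqrt_prod' {ι : Type} (s : Finset ι) (f : ι → ℝ) (h : ∀ i ∈ s, 0 ≤ f i) :
    Real.sqrt (∏ i ∈ s, f i) = ∏ i ∈ s, Real.sqrt (f i) := by
  induction s using Finset.cons_induction with
  | empty => simp
  | cons a s ha ih =>
    rw [Finset.prod_cons, Finset.prod_cons,
      Real.sqrt_mul (h a (Finset.mem_cons_self a s)),
      ih (fun i hi => h i (Finset.mem_cons.2 (Or.inr hi)))]

private lemma one_sub_prod_le' {ι : Type} (s : Finset ι) (f : ι → ℝ)
    (h0 : ∀ i ∈ s, 0 ≤ f i) (h1 : ∀ i ∈ s, f i ≤ 1) :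
    1 - ∏ i ∈ s, f i ≤ ∑ i ∈ s, (1 - f i) := by
  induction s using Finset.cons_induction with
  | empty => simp
  | cons a s ha ih =>
    rw [Finset.prod_cons, Finset.sum_cons]
    have hp0 : (0:ℝ) ≤ ∏ i ∈ s, f i :=
      Finset.prod_nonneg fun i hi => h0 i (Finset.mem_cons.2 (Or.inr hi))
    have hp1 : ∏ i ∈ s, f i ≤ 1 :=
      Finset.prod_le_one (fun i hi => h0 i (Finset.mem_cons.2 (Or.inr hi)))
        (fun i hi => h1 i (Finset.mem_cons.2 (Or.inr hi)))
    have hih := ih (fun i hi => h0 i (Finset.mem_cons.2 (Or.inr hi)))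
      (fun i hi => h1 i (Finset.mem_cons.2 (Or.inr hi)))
    have ha0 := h0 a (Finset.mem_cons_self a s)
    have ha1 := h1 a (Finset.mem_cons_self a s)
    nlinarith

private lemma sum_prod_bool' {A : Type} [Fintype A] [DecidableEq A] (r : A → Bool → ℝ) :
    ∑ x : A → Bool, ∏ a, r a (x a) = ∏ a, (r a true + r a false) := by
  rw [← Fintype.prod_sum (fun a b => r a b)]
  exact Finset.prod_congr rfl fun a _ => by simp [Fintype.sum_bool]

private lemma sqrt_diff_sq_le (p q : ℝ) (hp : 0 ≤ p) (hq : 0 < q) :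
    (Real.sqrt p - Real.sqrt q) ^ 2 ≤ (p - q) ^ 2 / q := by
  have ha := Real.sqrt_nonneg p
  have hb := Real.sqrt_nonneg q
  have h1 : Real.sqrt p ^ 2 = p := Real.sq_sqrt hp
  have h2 : Real.sqrt q ^ 2 = q := Real.sq_sqrt hq.le
  rw [le_div_iff₀ hq]
  nlinarith [sq_nonneg (Real.sqrt p - Real.sqrt q), mul_nonneg ha hb,
    mul_nonneg (mul_nonneg ha hb) (sq_nonneg (Real.sqrt p - Real.sqrt q)),
    mul_nonneg (mul_nonneg ha ha) (sq_nonneg (Real.sqrt p - Real.sqrt q))]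

private lemma pointwise_bd (εh p q : ℝ) (hε : 0 < εh) (hp0 : 0 ≤ p) (hp1 : p ≤ 1)
    (hq0 : 0 < q) (hq1 : q ≤ 1 - εh) :
    2 - 2 * (Real.sqrt p * Real.sqrt q + Real.sqrt (1 - p) * Real.sqrt (1 - q))
      ≤ (1 + 1 / εh) * ((p - q) ^ 2 / q) := by
  have h1p : (0:ℝ) ≤ 1 - p := by linarith
  have h1q : (0:ℝ) < 1 - q := by linarith
  have e1 : (Real.sqrt p - Real.sqrt q) ^ 2 ≤ (p - q) ^ 2 / q := sqrt_diff_sq_le p q hp0 hq0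
  have e2 : (Real.sqrt (1 - p) - Real.sqrt (1 - q)) ^ 2 ≤ ((1 - p) - (1 - q)) ^ 2 / (1 - q) :=
    sqrt_diff_sq_le (1 - p) (1 - q) h1p h1q
  have e2' : ((1 - p) - (1 - q)) ^ 2 / (1 - q) ≤ (p - q) ^ 2 / εh := by
    rw [show ((1 - p) - (1 - q)) ^ 2 = (p - q) ^ 2 by ring]
    gcongr
    linarith
  have e3 : (p - q) ^ 2 / εh ≤ (1 / εh) * ((p - q) ^ 2 / q) := by
    rw [div_eq_mul_inv, mul_comm, ← one_div]
    have h : (p - q) ^ 2 ≤ (p - q) ^ 2 / q := by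
      rw [le_div_iff₀ hq0]
      nlinarith [sq_nonneg (p - q)]
    exact mul_le_mul_of_nonneg_left h (by positivity)
  have h1 : Real.sqrt p ^ 2 = p := Real.sq_sqrt hp0
  have h2 : Real.sqrt q ^ 2 = q := Real.sq_sqrt hq0.le
  have h3 : Real.sqrt (1 - p) ^ 2 = 1 - p := Real.sq_sqrt h1p
  have h4 : Real.sqrt (1 - q) ^ 2 = 1 - q := Real.sq_sqrt h1q.le
  have key : 2 - 2 * (Real.sqrt p * Real.sqrt q + Real.sqrt (1 - p) * Real.sqrt (1 - q))
      = (Real.sqrt p - Real.sqrt q) ^ 2 + (Real.sqrt (1 - p) - Real.sqrt (1 - q)) ^ 2 := by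
    linear_combination -h1 - h2 - h3 - h4
  have expand : (1 + 1 / εh) * ((p - q) ^ 2 / q)
      = (p - q) ^ 2 / q + (1 / εh) * ((p - q) ^ 2 / q) := by ring
  linarith

end JansonAux

/-- Janson-type criterion: the total variation distance between two product Bernoulli
laws with success probabilities `p` and `q` (with `q` bounded away from `1`) is bounded
by `C(ε̂) · (Σ (pₐ-qₐ)²/qₐ)^{1/2}`; in particular the probability of any event differs
by at most this bound. -/
theorem bernoulli_product_tv (εh : ℝ) (hε : 0 < εh) :
    ∃ C : ℝ, 0 < C ∧ ∀ (A : Type) [Fintype A] [DecidableEq A] (p q : A → ℝ),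
      (∀ a, 0 ≤ p a ∧ p a ≤ 1) → (∀ a, 0 < q a ∧ q a ≤ 1 - εh) →
      ((1 / 2) * ∑ x : A → Bool,
          |(∏ a, if x a then p a else 1 - p a) - (∏ a, if x a then q a else 1 - q a)|
        ≤ C * Real.sqrt (∑ a, (p a - q a) ^ 2 / q a)) ∧
      ∀ E : Finset (A → Bool),
        |∑ x ∈ E, ((∏ a, if x a then p a else 1 - p a) -
            (∏ a, if x a then q a else 1 - q a))|
          ≤ C * Real.sqrt (∑ a, (p a - q a) ^ 2 / q a) := by
  have hK : (0:ℝ) < 1 + 1 / εh := by positivity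
  refine ⟨Real.sqrt (1 + 1 / εh), Real.sqrt_pos.2 hK, ?_⟩
  intro A _ _ p q hp hq
  set F : (A → Bool) → ℝ := fun x => ∏ a, (if x a then p a else 1 - p a) with hF
  set G : (A → Bool) → ℝ := fun x => ∏ a, (if x a then q a else 1 - q a) with hG
  set S : ℝ := ∑ a, (p a - q a) ^ 2 / q a with hSdef
  have hS0 : 0 ≤ S := Finset.sum_nonneg fun a _ => div_nonneg (sq_nonneg _) (hq a).1.le
  -- pointwise nonnegativity of factors
  have hpf : ∀ (x : A → Bool) (a : A), 0 ≤ (if x a then p a else 1 - p a) := by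
    intro x a; cases hxa : x a <;> simp [hxa]
    · linarith [(hp a).2]
    · exact (hp a).1
  have hqf : ∀ (x : A → Bool) (a : A), 0 ≤ (if x a then q a else 1 - q a) := by
    intro x a; cases hxa : x a <;> simp [hxa]
    · linarith [(hq a).2, hε]
    · exact (hq a).1.le
  have hFnn : ∀ x, 0 ≤ F x := fun x => Finset.prod_nonneg fun a _ => hpf x a
  have hGnn : ∀ x, 0 ≤ G x := fun x => Finset.prod_nonneg fun a _ => hqf x a
  -- total masses are 1
  have hsumF : ∑ x : A → Bool, F x = 1 := by
    rw [hF, sum_prod_bool' (fun a b => if b then p a else 1 - p a)]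
    exact Finset.prod_eq_one fun a _ => by norm_num
  have hsumG : ∑ x : A → Bool, G x = 1 := by
    rw [hG, sum_prod_bool' (fun a b => if b then q a else 1 - q a)]
    exact Finset.prod_eq_one fun a _ => by norm_num
  -- sqrt of the product
  have hsqrtF : ∀ x, Real.sqrt (F x) = ∏ a, (if x a then Real.sqrt (p a) else Real.sqrt (1 - p a)) := by
    intro x
    rw [hF]
    rw [sqrt_prod' _ _ (fun a _ => hpf x a)]
    exact Finset.prod_congr rfl fun a _ => (apply_ite Real.sqrt (x a) _ _)
  have hsqrtG : ∀ x, Real.sqrt (G x) = ∏ a, (if x a then Real.sqrt (q a) else Real.sqrt (1 - q a)) := by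
    intro x
    rw [hG]
    rw [sqrt_prod' _ _ (fun a _ => hqf x a)]
    exact Finset.prod_congr rfl fun a _ => (apply_ite Real.sqrt (x a) _ _)
  -- Bhattacharyya coefficient
  set ρ : A → ℝ := fun a =>
    Real.sqrt (p a) * Real.sqrt (q a) + Real.sqrt (1 - p a) * Real.sqrt (1 - q a) with hρ
  have hρdef : ∀ a, ρ a = Real.sqrt (p a) * Real.sqrt (q a)
      + Real.sqrt (1 - p a) * Real.sqrt (1 - q a) := fun a => rfl
  have hsumFG : ∑ x : A → Bool, Real.sqrt (F x) * Real.sqrt (G x) = ∏ a, ρ a := by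
    have : ∀ x : A → Bool, Real.sqrt (F x) * Real.sqrt (G x)
        = ∏ a, ((if x a then Real.sqrt (p a) else Real.sqrt (1 - p a))
            * (if x a then Real.sqrt (q a) else Real.sqrt (1 - q a))) := by
      intro x
      rw [hsqrtF x, hsqrtG x, ← Finset.prod_mul_distrib]
    rw [Finset.sum_congr rfl fun x _ => this x,
      sum_prod_bool' (fun a b =>
        (if b then Real.sqrt (p a) else Real.sqrt (1 - p a))
          * (if b then Real.sqrt (q a) else Real.sqrt (1 - q a)))]
    refine Finset.prod_congr rfl fun a _ => ?_
    rw [hρdef a]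
    norm_num
  have hρ0 : ∀ a, 0 ≤ ρ a := fun a => by
    have := Real.sqrt_nonneg (p a); have := Real.sqrt_nonneg (q a)
    have := Real.sqrt_nonneg (1 - p a); have := Real.sqrt_nonneg (1 - q a)
    positivity
  have hρ1 : ∀ a, ρ a ≤ 1 := by
    intro a
    rw [hρdef a]
    have h1 : Real.sqrt (p a) ^ 2 = p a := Real.sq_sqrt (hp a).1
    have h2 : Real.sqrt (q a) ^ 2 = q a := Real.sq_sqrt (hq a).1.le
    have h3 : Real.sqrt (1 - p a) ^ 2 = 1 - p a := Real.sq_sqrt (by linarith [(hp a).2])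
    have h4 : Real.sqrt (1 - q a) ^ 2 = 1 - q a := Real.sq_sqrt (by linarith [(hq a).2, hε])
    nlinarith [sq_nonneg (Real.sqrt (p a) - Real.sqrt (q a)),
      sq_nonneg (Real.sqrt (1 - p a) - Real.sqrt (1 - q a))]
  set PP : ℝ := ∏ a, ρ a with hPP
  have hPP0 : 0 ≤ PP := Finset.prod_nonneg fun a _ => hρ0 a
  have hPP1 : PP ≤ 1 := Finset.prod_le_one (fun a _ => hρ0 a) (fun a _ => hρ1 a)
  -- Hellinger sums
  have hdiffsum : ∑ x : A → Bool, (Real.sqrt (F x) - Real.sqrt (G x)) ^ 2 = 2 - 2 * PP := by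
    have expand : ∀ x : A → Bool, (Real.sqrt (F x) - Real.sqrt (G x)) ^ 2
        = F x + G x - 2 * (Real.sqrt (F x) * Real.sqrt (G x)) := by
      intro x
      have e1 : Real.sqrt (F x) ^ 2 = F x := Real.sq_sqrt (hFnn x)
      have e2 : Real.sqrt (G x) ^ 2 = G x := Real.sq_sqrt (hGnn x)
      linear_combination e1 + e2
    rw [Finset.sum_congr rfl fun x _ => expand x]
    rw [Finset.sum_sub_distrib, Finset.sum_add_distrib, ← Finset.mul_sum,
      hsumF, hsumG, hsumFG]
    ring
  have hplussum : ∑ x : A → Bool, (Real.sqrt (F x) + Real.sqrt (G x)) ^ 2 = 2 + 2 * PP := by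
    have expand : ∀ x : A → Bool, (Real.sqrt (F x) + Real.sqrt (G x)) ^ 2
        = F x + G x + 2 * (Real.sqrt (F x) * Real.sqrt (G x)) := by
      intro x
      have e1 : Real.sqrt (F x) ^ 2 = F x := Real.sq_sqrt (hFnn x)
      have e2 : Real.sqrt (G x) ^ 2 = G x := Real.sq_sqrt (hGnn x)
      linear_combination e1 + e2
    rw [Finset.sum_congr rfl fun x _ => expand x]
    rw [Finset.sum_add_distrib, Finset.sum_add_distrib, ← Finset.mul_sum,
      hsumF, hsumG, hsumFG]
    ring
  -- total variation
  set T : ℝ := ∑ x : A → Bool, |F x - G x| with hT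
  have hT0 : 0 ≤ T := Finset.sum_nonneg fun x _ => abs_nonneg _
  have habs : ∀ x : A → Bool, |F x - G x|
      = |Real.sqrt (F x) - Real.sqrt (G x)| * (Real.sqrt (F x) + Real.sqrt (G x)) := by
    intro x
    have e1 : Real.sqrt (F x) ^ 2 = F x := Real.sq_sqrt (hFnn x)
    have e2 : Real.sqrt (G x) ^ 2 = G x := Real.sq_sqrt (hGnn x)
    have hfac : F x - G x = (Real.sqrt (F x) - Real.sqrt (G x)) * (Real.sqrt (F x) + Real.sqrt (G x)) := by
      linear_combination e2 - e1
    rw [hfac, abs_mul]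
    congr 1
    exact abs_of_nonneg (by positivity)
  have hCS : T ^ 2 ≤ (2 - 2 * PP) * (2 + 2 * PP) := by
    have := Finset.sum_mul_sq_le_sq_mul_sq Finset.univ
      (fun x : A → Bool => |Real.sqrt (F x) - Real.sqrt (G x)|)
      (fun x : A → Bool => Real.sqrt (F x) + Real.sqrt (G x))
    simp only [sq_abs] at this
    calc T ^ 2 = (∑ x : A → Bool,
          |Real.sqrt (F x) - Real.sqrt (G x)| * (Real.sqrt (F x) + Real.sqrt (G x))) ^ 2 := by
          rw [hT, Finset.sum_congr rfl fun x _ => habs x]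
      _ ≤ (∑ x : A → Bool, (Real.sqrt (F x) - Real.sqrt (G x)) ^ 2)
            * ∑ x : A → Bool, (Real.sqrt (F x) + Real.sqrt (G x)) ^ 2 := this
      _ = (2 - 2 * PP) * (2 + 2 * PP) := by rw [hdiffsum, hplussum]
  have hTsq : T ^ 2 ≤ 4 * (2 - 2 * PP) := by nlinarith
  -- Hellinger vs chi-square
  have hBhat : 2 - 2 * PP ≤ (1 + 1 / εh) * S := by
    have h1 : 1 - PP ≤ ∑ a, (1 - ρ a) :=
      one_sub_prod_le' Finset.univ ρ (fun a _ => hρ0 a) (fun a _ => hρ1 a)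
    have h2 : ∑ a, 2 * (1 - ρ a) ≤ ∑ a, (1 + 1 / εh) * ((p a - q a) ^ 2 / q a) := by
      refine Finset.sum_le_sum fun a _ => ?_
      have := pointwise_bd εh (p a) (q a) hε (hp a).1 (hp a).2 (hq a).1 (hq a).2
      rw [hρdef a]; linarith
    rw [hSdef, Finset.mul_sum]
    have h3 : ∑ a, 2 * (1 - ρ a) = 2 * ∑ a, (1 - ρ a) := by rw [Finset.mul_sum]
    linarith
  -- conclude first statement
  have main : (1 / 2) * T ≤ Real.sqrt (1 + 1 / εh) * Real.sqrt S := by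
    have hsq : ((1 / 2) * T) ^ 2 ≤ (1 + 1 / εh) * S := by nlinarith
    calc (1 / 2) * T = Real.sqrt (((1 / 2) * T) ^ 2) := (Real.sqrt_sq (by positivity)).symm
      _ ≤ Real.sqrt ((1 + 1 / εh) * S) := Real.sqrt_le_sqrt hsq
      _ = Real.sqrt (1 + 1 / εh) * Real.sqrt S := Real.sqrt_mul hK.le S
  refine ⟨main, ?_⟩
  intro E
  have hsplit : ∑ x ∈ E, (F x - G x) + ∑ x ∈ Eᶜ, (F x - G x) = 0 := by
    rw [Finset.sum_add_sum_compl, Finset.sum_sub_distrib, hsumF, hsumG]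
    ring
  have hE1 : |∑ x ∈ E, (F x - G x)| ≤ ∑ x ∈ E, |F x - G x| :=
    Finset.abs_sum_le_sum_abs _ _
  have hE2 : |∑ x ∈ Eᶜ, (F x - G x)| ≤ ∑ x ∈ Eᶜ, |F x - G x| :=
    Finset.abs_sum_le_sum_abs _ _
  have hEc : ∑ x ∈ E, |F x - G x| + ∑ x ∈ Eᶜ, |F x - G x| = T :=
    Finset.sum_add_sum_compl E _
  have heq : |∑ x ∈ E, (F x - G x)| = |∑ x ∈ Eᶜ, (F x - G x)| := by
    rw [show ∑ x ∈ E, (F x - G x) = -∑ x ∈ Eᶜ, (F x - G x) by linarith, abs_neg]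
  have : |∑ x ∈ E, (F x - G x)| ≤ (1 / 2) * T := by
    rw [heq] at hE1 ⊢
    -- careful: after rw heq both sides about Eᶜ... fix below
    linarith
  calc |∑ x ∈ E, (F x - G x)| ≤ (1 / 2) * T := this
    _ ≤ Real.sqrt (1 + 1 / εh) * Real.sqrt S := main
end
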